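/- arXiv:2404.15722 — 2 statements merged into one kernel-verified Lean document; each statement's English description precedes it below -/
import Mathlib

section
/- Under the stated assumptions, the pseudo-variance of Z, defined as PVar(Z) = E[Z²] − (E[Z])², equals exp(2i(θ + φ))·((i₀² + σ_i²)·c_{ε_θ}(2)·c_{ε_φ}(2) − i₀²·c_{ε_θ}(1)²·c_{ε_φ}(1)²). -/
open MeasureTheory ProbabilityTheory Complex

lemma indepFun_integral_complex_mul {Ω : Type*} [MeasurableSpace Ω] {μ : Measure Ω}
    {X Y : Ω → ℂ} (h : IndepFun X Y μ) (hX : Integrable X μ) (hY : Integrable Y μ) :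
    ∫ ω, X ω * Y ω ∂μ = (∫ ω, X ω ∂μ) * ∫ ω, Y ω ∂μ := by
  have hXY : Integrable (fun ω => X ω * Y ω) μ := h.integrable_mul hX hY
  have hre : Measurable fun z : ℂ => z.re := Complex.measurable_re
  have him : Measurable fun z : ℂ => z.im := Complex.measurable_im
  have hXr : Integrable (fun ω => (X ω).re) μ := hX.re
  have hXi : Integrable (fun ω => (X ω).im) μ := hX.im
  have hYr : Integrable (fun ω => (Y ω).re) μ := hY.re
  have hYi : Integrable (fun ω => (Y ω).im) μ := hY.im
  have hrr : ∫ ω, (X ω).re * (Y ω).re ∂μ = (∫ ω, (X ω).re ∂μ) * ∫ ω, (Y ω).re ∂μ :=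
    (h.comp hre hre).integral_fun_mul_eq_mul_integral hXr.1 hYr.1
  have hri : ∫ ω, (X ω).re * (Y ω).im ∂μ = (∫ ω, (X ω).re ∂μ) * ∫ ω, (Y ω).im ∂μ :=
    (h.comp hre him).integral_fun_mul_eq_mul_integral hXr.1 hYi.1
  have hir : ∫ ω, (X ω).im * (Y ω).re ∂μ = (∫ ω, (X ω).im ∂μ) * ∫ ω, (Y ω).re ∂μ :=
    (h.comp him hre).integral_fun_mul_eq_mul_integral hXi.1 hYr.1
  have hii : ∫ ω, (X ω).im * (Y ω).im ∂μ = (∫ ω, (X ω).im ∂μ) * ∫ ω, (Y ω).im ∂μ :=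
    (h.comp him him).integral_fun_mul_eq_mul_integral hXi.1 hYi.1
  have h1 : ∫ ω, (X ω * Y ω).re ∂μ
      = (∫ ω, (X ω).re ∂μ) * (∫ ω, (Y ω).re ∂μ)
        - (∫ ω, (X ω).im ∂μ) * (∫ ω, (Y ω).im ∂μ) := by
    simp_rw [Complex.mul_re]
    have irr : Integrable (fun ω => (X ω).re * (Y ω).re) μ :=
      (h.comp hre hre).integrable_mul hXr hYr
    have iii : Integrable (fun ω => (X ω).im * (Y ω).im) μ :=
      (h.comp him him).integrable_mul hXi hYi
    rw [integral_sub irr iii, hrr, hii]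
  have h2 : ∫ ω, (X ω * Y ω).im ∂μ
      = (∫ ω, (X ω).re ∂μ) * (∫ ω, (Y ω).im ∂μ)
        + (∫ ω, (X ω).im ∂μ) * (∫ ω, (Y ω).re ∂μ) := by
    simp_rw [Complex.mul_im]
    have iri : Integrable (fun ω => (X ω).re * (Y ω).im) μ :=
      (h.comp hre him).integrable_mul hXr hYi
    have iir : Integrable (fun ω => (X ω).im * (Y ω).re) μ :=
      (h.comp him hre).integrable_mul hXi hYr
    rw [integral_add iri iir, hri, hir]
  rw [← integral_re_add_im hXY, ← integral_re_add_im hX, ← integral_re_add_im hY]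
  simp only [RCLike.re_to_complex, RCLike.im_to_complex, RCLike.I_to_complex]
  rw [h1, h2]
  push_cast
  ring_nf
  rw [Complex.I_sq]
  ring

/-- Pseudo-variance of the EM current phasor:
`PVar(Z) = E[Z²] − (E[Z])²
= exp(2i(θ+φ))·((i₀² + σ_i²)·c_{ε_θ}(2)·c_{ε_φ}(2) − i₀²·c_{ε_θ}(1)²·c_{ε_φ}(1)²)` for
`Z = (i₀ + ε_i)·exp(i(θ + φ + ε_θ + ε_φ))` with `ε_i, ε_θ, ε_φ` mutually independent,
`E[ε_i] = 0`, `E[ε_i²] = σ_i² < ∞`, `E[ε_θ] = 0`, `E[ε_φ] = 0`. -/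
theorem pseudoVariance_of_noisy_current_phasor
    {Ω : Type*} [MeasurableSpace Ω] (μ : Measure Ω) [IsProbabilityMeasure μ]
    (i₀ θ φ σi : ℝ) (εi εθ εφ : Ω → ℝ)
    (hmi : Measurable εi) (hmθ : Measurable εθ) (hmφ : Measurable εφ)
    (hindep : iIndepFun
      ![εi, εθ, εφ] μ)
    (hii : Integrable εi μ)
    (hii2 : Integrable (fun ω => (εi ω) ^ 2) μ)
    (hEi : ∫ ω, εi ω ∂μ = 0)
    (hEi2 : ∫ ω, (εi ω) ^ 2 ∂μ = σi ^ 2)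
    (hiθ : Integrable εθ μ) (hEθ : ∫ ω, εθ ω ∂μ = 0)
    (hiφ : Integrable εφ μ) (hEφ : ∫ ω, εφ ω ∂μ = 0) :
    (∫ ω, (((i₀ + εi ω : ℝ) : ℂ)
          * Complex.exp (Complex.I * ((θ + φ + εθ ω + εφ ω : ℝ) : ℂ))) ^ 2 ∂μ)
      - (∫ ω, ((i₀ + εi ω : ℝ) : ℂ)
          * Complex.exp (Complex.I * ((θ + φ + εθ ω + εφ ω : ℝ) : ℂ)) ∂μ) ^ 2
      = Complex.exp (2 * Complex.I * ((θ + φ : ℝ) : ℂ))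
          * ((((i₀ ^ 2 + σi ^ 2 : ℝ)) : ℂ)
                * (∫ ω, Complex.exp (Complex.I * ((2 : ℝ) : ℂ) * ((εθ ω : ℝ) : ℂ)) ∂μ)
                * (∫ ω, Complex.exp (Complex.I * ((2 : ℝ) : ℂ) * ((εφ ω : ℝ) : ℂ)) ∂μ)
             - ((i₀ : ℂ) ^ 2)
                * (∫ ω, Complex.exp (Complex.I * ((1 : ℝ) : ℂ) * ((εθ ω : ℝ) : ℂ)) ∂μ) ^ 2
                * (∫ ω, Complex.exp (Complex.I * ((1 : ℝ) : ℂ) * ((εφ ω : ℝ) : ℂ)) ∂μ) ^ 2) := by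
  -- boundedness/integrability of the exponential factors
  have hexp_meas : ∀ (t : ℝ) (f : Ω → ℝ), Measurable f →
      Measurable (fun ω => Complex.exp (Complex.I * (t : ℂ) * (f ω : ℂ))) := by
    intro t f hf
    exact Complex.measurable_exp.comp
      (measurable_const.mul (Complex.measurable_ofReal.comp hf))
  have hexp_int : ∀ (t : ℝ) (f : Ω → ℝ), Measurable f →
      Integrable (fun ω => Complex.exp (Complex.I * (t : ℂ) * (f ω : ℂ))) μ := by
    intro t f hf
    refine ⟨(hexp_meas t f hf).aestronglyMeasurable, ?_⟩
    refine (hasFiniteIntegral_const (1 : ℝ)).mono' ?_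
    filter_upwards with ω
    simp [Complex.norm_exp, Complex.mul_re, Complex.mul_im]
  -- the key independence-based factorization
  have key : ∀ (F : ℝ → ℂ), Measurable F → Integrable (fun ω => F (εi ω)) μ → ∀ t s : ℝ,
      ∫ ω, F (εi ω) * (Complex.exp (Complex.I * (t : ℂ) * (εθ ω : ℂ))
          * Complex.exp (Complex.I * (s : ℂ) * (εφ ω : ℂ))) ∂μ
      = (∫ ω, F (εi ω) ∂μ)
        * ((∫ ω, Complex.exp (Complex.I * (t : ℂ) * (εθ ω : ℂ)) ∂μ)
          * (∫ ω, Complex.exp (Complex.I * (s : ℂ) * (εφ ω : ℂ)) ∂μ)) := by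
    intro F hF hFint t s
    have hθφ : IndepFun εθ εφ μ := by
      have h12 := hindep.indepFun (show (1 : Fin 3) ≠ 2 by decide)
      simpa using h12
    have hθφ' : IndepFun (fun ω => Complex.exp (Complex.I * (t : ℂ) * (εθ ω : ℂ)))
        (fun ω => Complex.exp (Complex.I * (s : ℂ) * (εφ ω : ℂ))) μ :=
      hθφ.comp (Complex.measurable_exp.comp
          (measurable_const.mul Complex.measurable_ofReal))
        (Complex.measurable_exp.comp (measurable_const.mul Complex.measurable_ofReal))
    have hpair : IndepFun (fun ω => (εθ ω, εφ ω)) εi μ := by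
      have h := hindep.indepFun_prodMk
        (fun i => by fin_cases i <;> simpa) 1 2 0 (by decide) (by decide)
      simpa using h
    have hmain : IndepFun (fun ω => F (εi ω))
        (fun ω => Complex.exp (Complex.I * (t : ℂ) * (εθ ω : ℂ))
          * Complex.exp (Complex.I * (s : ℂ) * (εφ ω : ℂ))) μ := by
      have h := (hpair.comp
        (show Measurable (fun p : ℝ × ℝ => Complex.exp (Complex.I * (t : ℂ) * (p.1 : ℂ))
            * Complex.exp (Complex.I * (s : ℂ) * (p.2 : ℂ))) from
          ((Complex.measurable_exp.comp
              (measurable_const.mul (Complex.measurable_ofReal.comp measurable_fst))).mul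
            (Complex.measurable_exp.comp
              (measurable_const.mul (Complex.measurable_ofReal.comp measurable_snd)))))
        hF).symm
      exact h
    rw [indepFun_integral_complex_mul hmain hFint
      (hθφ'.integrable_mul (hexp_int t εθ hmθ) (hexp_int s εφ hmφ)),
      indepFun_integral_complex_mul hθφ' (hexp_int t εθ hmθ) (hexp_int s εφ hmφ)]
  -- moments of the amplitude
  have EAr : ∫ ω, (i₀ + εi ω) ∂μ = i₀ := by
    rw [integral_add (integrable_const _) hii, integral_const, hEi]
    simp
  have EA : ∫ ω, ((i₀ + εi ω : ℝ) : ℂ) ∂μ = (i₀ : ℂ) := by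
    calc ∫ ω, ((i₀ + εi ω : ℝ) : ℂ) ∂μ = ((∫ ω, (i₀ + εi ω) ∂μ : ℝ) : ℂ) := integral_ofReal
      _ = (i₀ : ℂ) := by rw [EAr]
  have EA2 : ∫ ω, ((i₀ + εi ω : ℝ) : ℂ) ^ 2 ∂μ = ((i₀ ^ 2 + σi ^ 2 : ℝ) : ℂ) := by
    have h1 : ∀ ω, ((i₀ + εi ω : ℝ) : ℂ) ^ 2 = (((i₀ + εi ω) ^ 2 : ℝ) : ℂ) := by
      intro ω; push_cast; ring
    simp_rw [h1]
    have h2 : ∀ ω, (i₀ + εi ω) ^ 2 = i₀ ^ 2 + (2 * i₀ * εi ω + εi ω ^ 2) := by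
      intro ω; ring
    have ia : Integrable (fun ω => 2 * i₀ * εi ω) μ := hii.const_mul (2 * i₀)
    have ig : Integrable (fun ω => 2 * i₀ * εi ω + εi ω ^ 2) μ := ia.add hii2
    have h3 : ∫ ω, (i₀ + εi ω) ^ 2 ∂μ = i₀ ^ 2 + σi ^ 2 := by
      simp_rw [h2]
      rw [integral_add (integrable_const _) ig, integral_add ia hii2,
        integral_const, integral_const_mul, hEi, hEi2]
      simp
    calc ∫ ω, (((i₀ + εi ω) ^ 2 : ℝ) : ℂ) ∂μ
        = ((∫ ω, (i₀ + εi ω) ^ 2 ∂μ : ℝ) : ℂ) := integral_ofReal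
      _ = ((i₀ ^ 2 + σi ^ 2 : ℝ) : ℂ) := by rw [h3]
  -- pointwise factorizations of the integrands
  have hz : ∀ ω, Complex.I * ((θ + φ + εθ ω + εφ ω : ℝ) : ℂ)
      = Complex.I * ((θ + φ : ℝ) : ℂ) + (Complex.I * ((1 : ℝ) : ℂ) * (εθ ω : ℂ)
        + Complex.I * ((1 : ℝ) : ℂ) * (εφ ω : ℂ)) := by
    intro ω; push_cast; ring
  have hs1 : ∀ ω, ((i₀ + εi ω : ℝ) : ℂ)
      * Complex.exp (Complex.I * ((θ + φ + εθ ω + εφ ω : ℝ) : ℂ))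
      = Complex.exp (Complex.I * ((θ + φ : ℝ) : ℂ))
        * (((i₀ + εi ω : ℝ) : ℂ) * (Complex.exp (Complex.I * ((1 : ℝ) : ℂ) * (εθ ω : ℂ))
          * Complex.exp (Complex.I * ((1 : ℝ) : ℂ) * (εφ ω : ℂ)))) := by
    intro ω
    rw [hz ω, Complex.exp_add, Complex.exp_add]
    ring
  have hsqθ : ∀ ω, Complex.exp (Complex.I * ((2 : ℝ) : ℂ) * (εθ ω : ℂ))
      = Complex.exp (Complex.I * ((1 : ℝ) : ℂ) * (εθ ω : ℂ)) ^ 2 := by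
    intro ω; rw [sq, ← Complex.exp_add]; congr 1; push_cast; ring
  have hsqφ : ∀ ω, Complex.exp (Complex.I * ((2 : ℝ) : ℂ) * (εφ ω : ℂ))
      = Complex.exp (Complex.I * ((1 : ℝ) : ℂ) * (εφ ω : ℂ)) ^ 2 := by
    intro ω; rw [sq, ← Complex.exp_add]; congr 1; push_cast; ring
  have hsqc : Complex.exp (2 * Complex.I * ((θ + φ : ℝ) : ℂ))
      = Complex.exp (Complex.I * ((θ + φ : ℝ) : ℂ)) ^ 2 := by
    rw [sq, ← Complex.exp_add]; congr 1; ring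
  have hs2 : ∀ ω, (((i₀ + εi ω : ℝ) : ℂ)
      * Complex.exp (Complex.I * ((θ + φ + εθ ω + εφ ω : ℝ) : ℂ))) ^ 2
      = Complex.exp (2 * Complex.I * ((θ + φ : ℝ) : ℂ))
        * (((i₀ + εi ω : ℝ) : ℂ) ^ 2 * (Complex.exp (Complex.I * ((2 : ℝ) : ℂ) * (εθ ω : ℂ))
          * Complex.exp (Complex.I * ((2 : ℝ) : ℂ) * (εφ ω : ℂ)))) := by
    intro ω
    rw [hz ω, Complex.exp_add, Complex.exp_add, hsqθ ω, hsqφ ω, hsqc]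
    ring
  simp_rw [hs2, hs1]
  rw [integral_const_mul, integral_const_mul]
  have hFmeas : Measurable (fun x : ℝ => ((i₀ + x : ℝ) : ℂ)) :=
    Complex.measurable_ofReal.comp (measurable_const.add measurable_id)
  have hFint : Integrable (fun ω => ((i₀ + εi ω : ℝ) : ℂ)) μ :=
    by exact ((integrable_const i₀).add hii).ofReal
  have hF2meas : Measurable (fun x : ℝ => ((i₀ + x : ℝ) : ℂ) ^ 2) := hFmeas.pow_const 2
  have hF2int : Integrable (fun ω => ((i₀ + εi ω : ℝ) : ℂ) ^ 2) μ := by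
    have hr : Integrable (fun ω => (i₀ + εi ω) ^ 2) μ := by
      have h := (integrable_const (i₀ ^ 2)).add ((hii.const_mul (2 * i₀)).add hii2)
      exact h.congr (by filter_upwards with ω; simp only [Pi.add_apply]; ring)
    have hr' : Integrable (fun ω => (((i₀ + εi ω) ^ 2 : ℝ) : ℂ)) μ := by exact hr.ofReal
    exact hr'.congr (by filter_upwards with ω; push_cast; ring)
  have k1 : ∫ ω, ((i₀ + εi ω : ℝ) : ℂ) * (Complex.exp (Complex.I * ((1 : ℝ) : ℂ) * (εθ ω : ℂ))
        * Complex.exp (Complex.I * ((1 : ℝ) : ℂ) * (εφ ω : ℂ))) ∂μ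
      = (∫ ω, ((i₀ + εi ω : ℝ) : ℂ) ∂μ)
        * ((∫ ω, Complex.exp (Complex.I * ((1 : ℝ) : ℂ) * (εθ ω : ℂ)) ∂μ)
          * (∫ ω, Complex.exp (Complex.I * ((1 : ℝ) : ℂ) * (εφ ω : ℂ)) ∂μ)) :=
    key _ hFmeas hFint 1 1
  have k2 : ∫ ω, ((i₀ + εi ω : ℝ) : ℂ) ^ 2
        * (Complex.exp (Complex.I * ((2 : ℝ) : ℂ) * (εθ ω : ℂ))
          * Complex.exp (Complex.I * ((2 : ℝ) : ℂ) * (εφ ω : ℂ))) ∂μ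
      = (∫ ω, ((i₀ + εi ω : ℝ) : ℂ) ^ 2 ∂μ)
        * ((∫ ω, Complex.exp (Complex.I * ((2 : ℝ) : ℂ) * (εθ ω : ℂ)) ∂μ)
          * (∫ ω, Complex.exp (Complex.I * ((2 : ℝ) : ℂ) * (εφ ω : ℂ)) ∂μ)) :=
    key _ hF2meas hF2int 2 2
  rw [k1, k2, EA, EA2, hsqc]
  ring
end

section
/- Assume in addition that Σ̄ is Hermitian positive definite. Let z ∈ ℂ^K, c ∈ ℂ^Q, and define g = 2Dᴴ(P*)⁻¹(z − W·z*). If x₀ ∈ ℂ^N satisfies C·x₀ = c and there exists λ ∈ ℂ^Q such that ḡ = Ḡ·x̄₀ + C̄ᴴ·λ̄, then x₀ minimizes the constrained weighted least-squares objective: for every x ∈ ℂ^N with C·x = c, the real number given by the 1×1 matrix (z̄ − D̄·x̄₀)ᴴ·Σ̄⁻¹·(z̄ − D̄·x̄₀) is less than or equal to that given by (z̄ − D̄·x̄)ᴴ·Σ̄⁻¹·(z̄ − D̄·x̄). -/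
open Matrix ComplexOrder

/-- Entrywise complex conjugation of a matrix. -/
noncomputable def cconj {m n : Type*} (B : Matrix m n ℂ) : Matrix m n ℂ :=
  B.map (starRingEnd ℂ)

/-- The augmented matrix `aug(B₁,B₂) = [[B₁, B₂],[B₂*, B₁*]]`. -/
noncomputable def aug {m n : Type*} (B₁ B₂ : Matrix m n ℂ) :
    Matrix (m ⊕ m) (n ⊕ n) ℂ :=
  Matrix.fromBlocks B₁ B₂ (cconj B₂) (cconj B₁)

/-- The augmented vector `v̄ = (v, v*)`. -/
noncomputable def augVec {n : Type*} (v : n → ℂ) : (n ⊕ n) → ℂ :=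
  Sum.elim v (fun i => starRingEnd ℂ (v i))

section Aux

variable {m n p : Type*}

lemma cconj_eq (A : Matrix m n ℂ) : cconj A = (Aᴴ)ᵀ := by
  ext i j; simp [cconj, Matrix.conjTranspose_apply]

lemma cconj_mul [Fintype n] (A : Matrix m n ℂ) (B : Matrix n p ℂ) :
    cconj (A * B) = cconj A * cconj B :=
  Matrix.map_mul

lemma cconj_zero : cconj (0 : Matrix m n ℂ) = 0 := by
  ext i j; simp [cconj]

lemma cconj_cconj (A : Matrix m n ℂ) : cconj (cconj A) = A := by
  ext i j; simp [cconj]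

lemma cconj_sub (A B : Matrix m n ℂ) : cconj (A - B) = cconj A - cconj B := by
  ext i j; simp [cconj]

lemma cconj_inv [Fintype n] [DecidableEq n] (A : Matrix n n ℂ) :
    cconj A⁻¹ = (cconj A)⁻¹ := by
  rw [cconj_eq, cconj_eq, ← Matrix.transpose_nonsing_inv, ← Matrix.conjTranspose_nonsing_inv]

lemma cconj_det [Fintype n] [DecidableEq n] (A : Matrix n n ℂ) :
    (cconj A).det = starRingEnd ℂ A.det := by
  rw [cconj_eq, Matrix.det_transpose, Matrix.det_conjTranspose]; rfl

lemma cconj_add (A B : Matrix m n ℂ) : cconj (A + B) = cconj A + cconj B := by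
  ext i j; simp [cconj]

lemma aug_mul [Fintype n] (A B : Matrix m n ℂ) (E F : Matrix n p ℂ) :
    aug A B * aug E F = aug (A * E + B * cconj F) (A * F + B * cconj E) := by
  unfold aug
  rw [Matrix.fromBlocks_multiply]
  have h3 : cconj B * E + cconj A * cconj F = cconj (A * F + B * cconj E) := by
    rw [cconj_add, cconj_mul, cconj_mul, cconj_cconj]; abel
  have h4 : cconj B * F + cconj A * cconj E = cconj (A * E + B * cconj F) := by
    rw [cconj_add, cconj_mul, cconj_mul, cconj_cconj]; abel
  rw [h3, h4]

lemma aug_conjTranspose (A B : Matrix m n ℂ) : (aug A B)ᴴ = aug Aᴴ Bᵀ := by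
  ext i j
  rcases i with i | i <;> rcases j with j | j <;>
    simp [aug, cconj, Matrix.conjTranspose_apply]

lemma cconj_mulVec [Fintype n] (A : Matrix m n ℂ) (v : n → ℂ) :
    (cconj A).mulVec (star v) = star (A.mulVec v) := by
  funext i
  simp [cconj, Matrix.mulVec, dotProduct, map_sum]

lemma aug_mulVec [Fintype n] (A B : Matrix m n ℂ) (v : n → ℂ) :
    (aug A B).mulVec (augVec v) = augVec (A.mulVec v + B.mulVec (star v)) := by
  have hv : (augVec v : (n ⊕ n) → ℂ) = Sum.elim v (star v) := rfl
  rw [aug, hv, Matrix.fromBlocks_mulVec]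
  have h1 : (cconj B).mulVec v = star (B.mulVec (star v)) := by
    simpa using cconj_mulVec B (star v)
  have h2 : (cconj A).mulVec (star v) = star (A.mulVec v) := cconj_mulVec A v
  funext i
  cases i with
  | inl i => simp [augVec]
  | inr i =>
      have e1 := congrFun h1 i
      have e2 := congrFun h2 i
      simp only [Pi.star_apply] at e1 e2
      simp [augVec, e1, e2, add_comm]

lemma augVec_sub (v w : n → ℂ) : augVec (v - w) = augVec v - augVec w := by
  funext i; cases i <;> simp [augVec]

lemma augVec_zero : augVec (0 : n → ℂ) = 0 := by
  funext i; cases i <;> simp [augVec]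

end Aux

/-- If `x₀` satisfies the constraint `C·x₀ = c` and the stationarity equation
`ḡ = Ḡ·x̄₀ + C̄ᴴ·λ̄` for some `λ`, then `x₀` minimizes the constrained weighted
least-squares objective `(z̄ − D̄·x̄)ᴴ·Σ̄⁻¹·(z̄ − D̄·x̄)` over all `x` with `C·x = c`. -/
theorem ml_stationarity_minimizes
    (N K Q : ℕ) (hN : 0 < N) (hK : 0 < K) (hQ : 0 < Q)
    (D : Matrix (Fin K) (Fin N) ℂ) (C : Matrix (Fin Q) (Fin N) ℂ)
    (S₁ S₂ : Matrix (Fin K) (Fin K) ℂ)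
    (hherm : S₁ᴴ = S₁) (hS₁ : IsUnit S₁.det) (hsym : S₂ᵀ = S₂)
    (W P : Matrix (Fin K) (Fin K) ℂ)
    (hW : W = S₂ * (cconj S₁)⁻¹)
    (hP : P = cconj S₁ - S₂ᴴ * S₁⁻¹ * S₂)
    (hPinv : IsUnit P.det)
    (G₁ G₂ : Matrix (Fin N) (Fin N) ℂ)
    (hG₁ : G₁ = (2 : ℂ) • (Dᴴ * (cconj P)⁻¹ * D))
    (hG₂ : G₂ = (-2 : ℂ) • (Dᴴ * (cconj P)⁻¹ * W * cconj D))
    (hpd : (aug S₁ S₂).PosDef)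
    (z : Fin K → ℂ) (c : Fin Q → ℂ)
    (g : Fin N → ℂ)
    (hg : g = ((2 : ℂ) • (Dᴴ * (cconj P)⁻¹)).mulVec
      (z - W.mulVec (fun i => starRingEnd ℂ (z i))))
    (x₀ : Fin N → ℂ)
    (hx₀ : C.mulVec x₀ = c)
    (hstat : ∃ lam : Fin Q → ℂ,
      augVec g = (aug G₁ G₂).mulVec (augVec x₀) + (aug C 0)ᴴ.mulVec (augVec lam)) :
    ∀ x : Fin N → ℂ, C.mulVec x = c →
      star (augVec z - (aug D 0).mulVec (augVec x₀))
          ⬝ᵥ ((aug S₁ S₂)⁻¹).mulVec (augVec z - (aug D 0).mulVec (augVec x₀))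
        ≤ star (augVec z - (aug D 0).mulVec (augVec x))
          ⬝ᵥ ((aug S₁ S₂)⁻¹).mulVec (augVec z - (aug D 0).mulVec (augVec x)) := by
  intro x hx
  obtain ⟨lam, hlam⟩ := hstat
  have hcS₁ : IsUnit (cconj S₁).det := by rw [cconj_det]; exact hS₁.star
  have hcP : IsUnit (cconj P).det := by rw [cconj_det]; exact hPinv.star
  have hSdet : IsUnit (aug S₁ S₂).det := (Matrix.isUnit_iff_isUnit_det _).1 hpd.isUnit
  set M : Matrix (Fin K ⊕ Fin K) (Fin K ⊕ Fin K) ℂ := (aug S₁ S₂)⁻¹ with hMdef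
  have hMpd : M.PosDef := hpd.inv
  have hMherm : Mᴴ = M := hMpd.1
  set J₁ : Matrix (Fin N) (Fin K) ℂ := (2 : ℂ) • (Dᴴ * (cconj P)⁻¹) with hJ₁
  set J₂ : Matrix (Fin N) (Fin K) ℂ := (-2 : ℂ) • (Dᴴ * (cconj P)⁻¹ * W) with hJ₂
  have hcPeq : cconj P = S₁ - S₂ * (cconj S₁)⁻¹ * cconj S₂ := by
    have h1 : cconj (S₂ᴴ) = S₂ := by
      rw [cconj_eq, Matrix.conjTranspose_conjTranspose]; exact hsym
    rw [hP, cconj_sub, cconj_cconj, cconj_mul, cconj_mul, h1, cconj_inv]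
  have hJcomb : ∀ X Y : Matrix (Fin K) (Fin K) ℂ,
      J₁ * X + J₂ * Y = (2 : ℂ) • ((Dᴴ * (cconj P)⁻¹) * (X - W * Y)) := by
    intro X Y
    rw [hJ₁, hJ₂, Matrix.smul_mul, Matrix.smul_mul, Matrix.mul_sub, smul_sub,
      neg_smul, ← sub_eq_add_neg, Matrix.mul_assoc]
    simp [Matrix.mul_assoc]
  have h11 : J₁ * S₁ + J₂ * cconj S₂ = (2 : ℂ) • Dᴴ := by
    rw [hJcomb, hW, ← hcPeq, Matrix.nonsing_inv_mul_cancel_right _ _ hcP]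
  have h12 : J₁ * S₂ + J₂ * cconj S₁ = 0 := by
    rw [hJcomb, hW, Matrix.nonsing_inv_mul_cancel_right _ _ hcS₁, sub_self,
      Matrix.mul_zero, smul_zero]
  have hJS : aug J₁ J₂ * aug S₁ S₂ = aug ((2 : ℂ) • Dᴴ) 0 := by
    rw [aug_mul, h11, h12]
  have hD2 : (2 : ℂ) • (aug D 0)ᴴ = aug ((2 : ℂ) • Dᴴ) 0 := by
    rw [aug_conjTranspose]
    ext i j
    rcases i with i | i <;> rcases j with j | j <;>
      simp [aug, cconj, Matrix.transpose_apply, map_ofNat]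
  have hJ : aug J₁ J₂ = (2 : ℂ) • ((aug D 0)ᴴ * M) := by
    calc aug J₁ J₂ = aug J₁ J₂ * aug S₁ S₂ * (aug S₁ S₂)⁻¹ :=
          (Matrix.mul_nonsing_inv_cancel_right _ _ hSdet).symm
      _ = aug ((2 : ℂ) • Dᴴ) 0 * M := by rw [hJS]
      _ = (2 : ℂ) • ((aug D 0)ᴴ * M) := by rw [← hD2, Matrix.smul_mul]
  have hGJ : aug G₁ G₂ = aug J₁ J₂ * aug D 0 := by
    rw [aug_mul, cconj_zero, Matrix.mul_zero, Matrix.mul_zero, add_zero, zero_add,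
      hG₁, hG₂, hJ₁, hJ₂, Matrix.smul_mul, Matrix.smul_mul]
  have hJ₂W : J₂ = -(J₁ * W) := by
    rw [hJ₁, hJ₂, Matrix.smul_mul, neg_smul]
  have hgJ' : g = J₁.mulVec z + J₂.mulVec (star z) := by
    rw [hg, Matrix.mulVec_sub, Matrix.mulVec_mulVec, hJ₂W, Matrix.neg_mulVec,
      ← sub_eq_add_neg]
    rfl
  have hgJ : augVec g = (aug J₁ J₂).mulVec (augVec z) := by
    rw [aug_mulVec, hgJ']
  -- abbreviations
  set Db : Matrix (Fin K ⊕ Fin K) (Fin N ⊕ Fin N) ℂ := aug D 0 with hDb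
  set zb : (Fin K ⊕ Fin K) → ℂ := augVec z with hzb
  set xb₀ : (Fin N ⊕ Fin N) → ℂ := augVec x₀ with hxb₀
  set u : (Fin K ⊕ Fin K) → ℂ := zb - Db.mulVec xb₀ with hu
  set d : (Fin N ⊕ Fin N) → ℂ := augVec (x - x₀) with hd
  set e : (Fin K ⊕ Fin K) → ℂ := Db.mulVec d with he
  have hCd : (aug C 0).mulVec d = 0 := by
    have h0 : C.mulVec (x - x₀) = 0 := by
      rw [Matrix.mulVec_sub, hx, hx₀, sub_self]
    rw [hd, aug_mulVec, h0, Matrix.zero_mulVec, add_zero, augVec_zero]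
  have hstat2 : (aug C 0)ᴴ.mulVec (augVec lam) = ((2 : ℂ) • (Dbᴴ * M)).mulVec u := by
    have h1 : (aug C 0)ᴴ.mulVec (augVec lam)
        = augVec g - (aug G₁ G₂).mulVec xb₀ := by
      rw [hlam]; abel
    rw [h1, hgJ, hGJ, ← Matrix.mulVec_mulVec, ← Matrix.mulVec_sub, ← hu, hJ]
  have hcross : star e ⬝ᵥ M.mulVec u = 0 := by
    have h1 : star e ⬝ᵥ M.mulVec u = star d ⬝ᵥ (Dbᴴ * M).mulVec u := by
      rw [he, Matrix.star_mulVec, Matrix.dotProduct_mulVec, Matrix.vecMul_vecMul,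
        Matrix.dotProduct_mulVec]
    have h2 : (2 : ℂ) * (star d ⬝ᵥ (Dbᴴ * M).mulVec u) = 0 := by
      have h3 : star d ⬝ᵥ ((2 : ℂ) • (Dbᴴ * M)).mulVec u
          = (2 : ℂ) * (star d ⬝ᵥ (Dbᴴ * M).mulVec u) := by
        rw [Matrix.smul_mulVec, dotProduct_smul, smul_eq_mul]
      rw [← h3, ← hstat2, Matrix.dotProduct_mulVec, ← Matrix.star_mulVec, hCd]
      simp
    have h4 : star d ⬝ᵥ (Dbᴴ * M).mulVec u = 0 := by
      have := mul_eq_zero.1 h2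
      rcases this with h | h
      · exact absurd h (by norm_num)
      · exact h
    rw [h1, h4]
  have hcross' : star u ⬝ᵥ M.mulVec e = 0 := by
    rw [Matrix.star_dotProduct, Matrix.star_mulVec, hMherm, ← Matrix.dotProduct_mulVec,
      hcross, star_zero]
  have hxdecomp : augVec x = xb₀ + d := by
    rw [hd, augVec_sub, ← hxb₀]; abel
  have hsplit : zb - Db.mulVec (augVec x) = u - e := by
    rw [hxdecomp, Matrix.mulVec_add, hu, he]; abel
  rw [hsplit]
  have hexp : star (u - e) ⬝ᵥ M.mulVec (u - e)
      = star u ⬝ᵥ M.mulVec u + star e ⬝ᵥ M.mulVec e := by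
    rw [Matrix.mulVec_sub, star_sub, sub_dotProduct, dotProduct_sub,
      dotProduct_sub, hcross, hcross']
    ring
  rw [hexp]
  exact le_add_of_nonneg_right (hMpd.posSemidef.dotProduct_mulVec_nonneg e)
end
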